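/- Let τ > 0, b > 0, r ∈ (0,b], K ≥ 2, and fix μ_j > 0 for j = 1,…,K−1. Define F(β₁,…,β_{K−1}) = (∫₀^τ exp(−h̃(v) − Σ_j β_j h̃_j(v)) · e^(−rv)/(1−v/τ) dv)^(−1), where h̃_j(v) = ∫₀^v (1−e^(−μ_j u))/(1−u/τ) du and h̃(v) = (b/τ)∫₀^v u/(1−u/τ) du. Then as β_j → ∞ jointly (β_j = β t_j with fixed t_j > 0, β → ∞), F satisfies F ~ sqrt((2/π) Σ_j μ_j β_j). -/

import Mathlib

open Real Filter MeasureTheory intervalIntegral Set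

lemma sqrt_tendsto_atTop : Tendsto Real.sqrt atTop atTop := by
  have : Real.sqrt = fun x : ℝ => x ^ (1/2 : ℝ) := funext fun x => Real.sqrt_eq_rpow x
  rw [this]; exact tendsto_rpow_atTop (by norm_num)

lemma gauss_lim {a δ : ℝ} (ha : 0 < a) (hδ : 0 < δ) :
    Tendsto (fun B : ℝ => Real.sqrt B * ∫ v in (0:ℝ)..δ, Real.exp (-(B*a) * v^2))
      atTop (nhds (Real.sqrt (π/a) / 2)) := by
  have hint : IntegrableOn (fun s : ℝ => Real.exp (-s^2)) (Set.Ioi 0) := by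
    have := integrable_exp_neg_mul_sq (one_pos (α := ℝ))
    simpa using this.integrableOn
  have hΦ : Tendsto (fun X : ℝ => ∫ s in (0:ℝ)..X, Real.exp (-s^2)) atTop
      (nhds (Real.sqrt π / 2)) := by
    have h1 : (∫ s in Set.Ioi (0:ℝ), Real.exp (-s^2)) = Real.sqrt π / 2 := by
      have := integral_gaussian_Ioi 1
      simpa using this
    have := MeasureTheory.intervalIntegral_tendsto_integral_Ioi (b := fun X : ℝ => X)
      (f := fun s : ℝ => Real.exp (-s^2)) 0 hint tendsto_id
    rwa [h1] at this
  have hcomp : Tendsto (fun B : ℝ => Real.sqrt (B * a) * δ) atTop atTop :=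
    (sqrt_tendsto_atTop.comp (tendsto_id.atTop_mul_const ha)).atTop_mul_const hδ
  have key : ∀ᶠ B : ℝ in atTop,
      (1 / Real.sqrt a) * ∫ s in (0:ℝ)..(Real.sqrt (B*a) * δ), Real.exp (-s^2)
        = Real.sqrt B * ∫ v in (0:ℝ)..δ, Real.exp (-(B*a) * v^2) := by
    filter_upwards [eventually_gt_atTop 0] with B hB
    have hBa : 0 < B * a := mul_pos hB ha
    have hc : Real.sqrt (B * a) ≠ 0 := by positivity
    have h2 : ∀ v : ℝ, Real.exp (-(B*a) * v^2) = Real.exp (-(Real.sqrt (B*a) * v)^2) := by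
      intro v
      rw [mul_pow, Real.sq_sqrt hBa.le]; ring_nf
    have ha' : Real.sqrt a ≠ 0 := by positivity
    have hB' : Real.sqrt B ≠ 0 := by positivity
    calc (1 / Real.sqrt a) * ∫ s in (0:ℝ)..(Real.sqrt (B*a) * δ), Real.exp (-s^2)
        = Real.sqrt B * ((Real.sqrt (B*a))⁻¹ • ∫ s in (Real.sqrt (B*a) * 0)..(Real.sqrt (B*a) * δ), Real.exp (-s^2)) := by
          rw [mul_zero, smul_eq_mul, Real.sqrt_mul hB.le, mul_inv]
          field_simp
      _ = Real.sqrt B * ∫ v in (0:ℝ)..δ, Real.exp (-(Real.sqrt (B*a) * v)^2) := by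
          rw [intervalIntegral.integral_comp_mul_left (fun s => Real.exp (-s^2)) hc]
      _ = Real.sqrt B * ∫ v in (0:ℝ)..δ, Real.exp (-(B*a) * v^2) := by
          simp_rw [h2]
  have hL : Tendsto (fun B : ℝ => (1 / Real.sqrt a) * ∫ s in (0:ℝ)..(Real.sqrt (B*a) * δ), Real.exp (-s^2))
      atTop (nhds (Real.sqrt (π/a) / 2)) := by
    have h := (hΦ.comp hcomp).const_mul (1 / Real.sqrt a)
    have heq : 1 / Real.sqrt a * (Real.sqrt π / 2) = Real.sqrt (π/a) / 2 := by
      rw [Real.sqrt_div pi_pos.le]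
      ring
    rw [heq] at h
    exact h
  exact hL.congr' key

lemma sqrt_exp_decay {g₀ : ℝ} (hg : 0 < g₀) (M : ℝ) :
    Tendsto (fun B : ℝ => Real.sqrt B * (Real.exp (-(B-1)*g₀) * M)) atTop (nhds 0) := by
  have h := tendsto_rpow_mul_exp_neg_mul_atTop_nhds_zero (1/2) g₀ hg
  have h2 : Tendsto (fun B : ℝ => (B ^ (1/2:ℝ) * Real.exp (-g₀ * B)) * (Real.exp g₀ * M)) atTop (nhds 0) := by
    simpa using h.mul_const (Real.exp g₀ * M)
  apply h2.congr'
  filter_upwards [eventually_ge_atTop 0] with B hB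
  rw [← Real.sqrt_eq_rpow, mul_assoc, ← mul_assoc (Real.exp _), ← Real.exp_add, show -g₀*B+g₀ = -(B-1)*g₀ by ring]

lemma primitive_contAt {f : ℝ → ℝ} {x τ : ℝ} (hx0 : 0 ≤ x) (hxτ : x < τ)
    (hf : ContinuousOn f (Set.Iio τ)) (hm : Measurable f) :
    ContinuousAt (fun v => ∫ u in (0:ℝ)..v, f u) x := by
  have hsub : Set.uIcc 0 x ⊆ Set.Iio τ := by
    rw [Set.uIcc_of_le hx0]
    exact fun u hu => lt_of_le_of_lt hu.2 hxτ
  have hint : IntervalIntegrable f volume 0 x := (hf.mono hsub).intervalIntegrable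
  have hsm : StronglyMeasurableAtFilter f (nhds x) volume :=
    ⟨Set.univ, Filter.univ_mem, hm.aestronglyMeasurable⟩
  have hca : ContinuousAt f x := hf.continuousAt (isOpen_Iio.mem_nhds hxτ)
  exact (intervalIntegral.integral_hasDerivAt_right hint hsm hca).continuousAt

set_option maxHeartbeats 2000000 in
theorem stmt17 (τ b r : ℝ) (hτ : 0 < τ) (hb : 0 < b) (hr0 : 0 < r) (hrb : r ≤ b)
    (K : ℕ) (hK : 2 ≤ K) (μ t : Fin (K - 1) → ℝ)
    (hμ : ∀ j, 0 < μ j) (ht : ∀ j, 0 < t j) :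
    let htil : Fin (K - 1) → ℝ → ℝ := fun j v =>
      ∫ u in (0:ℝ)..v, (1 - Real.exp (-(μ j) * u)) / (1 - u / τ)
    let h0 : ℝ → ℝ := fun v => (b / τ) * ∫ u in (0:ℝ)..v, u / (1 - u / τ)
    let F : (Fin (K - 1) → ℝ) → ℝ := fun βv =>
      (∫ v in (0:ℝ)..τ,
        Real.exp (-(h0 v) - ∑ j, βv j * htil j v) * (Real.exp (-r * v) / (1 - v / τ)))⁻¹
    Tendsto
      (fun B : ℝ =>
        F (fun j => B * t j) / Real.sqrt ((2 / Real.pi) * ∑ j, μ j * (B * t j)))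
      atTop (nhds 1) := by
  intro htil h0 F
  -- basic setup
  have hKne : Nonempty (Fin (K - 1)) := by
    refine Fin.pos_iff_nonempty.mp ?_
    omega
  set c : ℝ := ∑ j, μ j * t j with hc_def
  have hc : 0 < c := Finset.sum_pos (fun j _ => mul_pos (hμ j) (ht j)) Finset.univ_nonempty
  -- denominators are nonzero on [0, τ)
  have hden : ∀ v : ℝ, v < τ → 0 < 1 - v / τ := by
    intro v hv
    have : v / τ < 1 := (div_lt_one hτ).2 hv
    linarith
  -- the aggregated functions
  set fj : Fin (K-1) → ℝ → ℝ := fun j u => (1 - Real.exp (-(μ j) * u)) / (1 - u / τ) with hfj_def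
  set fg : ℝ → ℝ := fun u => ∑ j, t j * fj j u with hfg_def
  set g : ℝ → ℝ := fun v => ∑ j, t j * htil j v with hg_def
  set φ : ℝ → ℝ → ℝ :=
    fun B v => Real.exp (-(h0 v) - B * g v) * (Real.exp (-r*v) / (1 - v/τ)) with hφ_def
  set w : ℝ → ℝ := fun v => Real.exp (-(h0 v)) * (Real.exp (-r*v) / (1 - v/τ)) with hw_def
  -- continuity and measurability of fj, fg
  have hfj_cont : ∀ j, ContinuousOn (fj j) (Set.Iio τ) := by
    intro j
    apply ContinuousOn.div
    · fun_prop
    · fun_prop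
    · exact fun u hu => ne_of_gt (hden u hu)
  have hfj_meas : ∀ j, Measurable (fj j) := by
    intro j
    apply Measurable.div <;> fun_prop
  have hfg_cont : ContinuousOn fg (Set.Iio τ) := by
    apply continuousOn_finset_sum
    intro j _
    exact (hfj_cont j).const_smul (t j) |>.congr (fun x _ => by simp [smul_eq_mul])
  have hfg_meas : Measurable fg := by
    apply Finset.measurable_sum
    intro j _
    exact (hfj_meas j).const_mul (t j)
  -- fj, fg nonneg on [0, τ)
  have hfj_nonneg : ∀ j, ∀ u, 0 ≤ u → u < τ → 0 ≤ fj j u := by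
    intro j u hu huτ
    apply div_nonneg _ (hden u huτ).le
    have : Real.exp (-(μ j) * u) ≤ 1 := by
      rw [Real.exp_le_one_iff]
      have := (hμ j).le
      nlinarith
    linarith
  have hfg_nonneg : ∀ u, 0 ≤ u → u < τ → 0 ≤ fg u :=
    fun u hu huτ => Finset.sum_nonneg fun j _ =>
      mul_nonneg (ht j).le (hfj_nonneg j u hu huτ)
  have hfg_pos : ∀ u, 0 < u → u < τ → 0 < fg u := by
    intro u hu huτ
    apply Finset.sum_pos _ Finset.univ_nonempty
    intro j _
    apply mul_pos (ht j)
    apply div_pos _ (hden u huτ)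
    have : Real.exp (-(μ j) * u) < 1 := by
      rw [Real.exp_lt_one_iff]
      have := hμ j
      nlinarith
    linarith
  -- interval integrability of fj / fg on subintervals of [0, τ)
  have hsubIcc : ∀ x y : ℝ, x < τ → y < τ → Set.uIcc x y ⊆ Set.Iio τ := by
    intro x y hx hy u hu
    exact lt_of_le_of_lt hu.2 (max_lt hx hy)
  have hfj_int : ∀ j, ∀ v, v < τ → IntervalIntegrable (fj j) volume 0 v :=
    fun j v hv => ((hfj_cont j).mono (hsubIcc 0 v hτ hv)).intervalIntegrable
  have hfg_int : ∀ v, v < τ → IntervalIntegrable fg volume 0 v :=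
    fun v hv => (hfg_cont.mono (hsubIcc 0 v hτ hv)).intervalIntegrable
  have hfg_int' : ∀ x y, x < τ → y < τ → IntervalIntegrable fg volume x y :=
    fun x y hx hy => (hfg_cont.mono (hsubIcc x y hx hy)).intervalIntegrable
  -- g as an integral of fg
  have hg_eq : ∀ v, v < τ → g v = ∫ u in (0:ℝ)..v, fg u := by
    intro v hv
    have h1 : ∀ j : Fin (K-1), t j * htil j v = ∫ u in (0:ℝ)..v, t j * fj j u := by
      intro j
      rw [intervalIntegral.integral_const_mul]
    calc g v = ∑ j, ∫ u in (0:ℝ)..v, t j * fj j u := Finset.sum_congr rfl fun j _ => h1 j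
      _ = ∫ u in (0:ℝ)..v, ∑ j, t j * fj j u :=
        (intervalIntegral.integral_finset_sum fun j _ => ((hfj_int j v hv).const_mul (t j))).symm
  -- g is nonneg on [0, τ)
  have hg_nonneg : ∀ v, 0 ≤ v → v < τ → 0 ≤ g v := by
    intro v hv hvτ
    rw [hg_eq v hvτ]
    apply intervalIntegral.integral_nonneg hv
    intro u hu
    exact hfg_nonneg u hu.1 (lt_of_le_of_lt hu.2 hvτ)
  -- g is "monotone" from δ
  have hg_mono : ∀ x v, 0 ≤ x → x ≤ v → v < τ → g x ≤ g v := by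
    intro x v hx hxv hvτ
    rw [hg_eq x (lt_of_le_of_lt hxv hvτ), hg_eq v hvτ]
    rw [← intervalIntegral.integral_add_adjacent_intervals (hfg_int x (lt_of_le_of_lt hxv hvτ))
      (hfg_int' x v (lt_of_le_of_lt hxv hvτ) hvτ)]
    have : 0 ≤ ∫ u in x..v, fg u := by
      apply intervalIntegral.integral_nonneg hxv
      intro u hu
      exact hfg_nonneg u (le_trans hx hu.1) (lt_of_le_of_lt hu.2 hvτ)
    linarith
  -- continuity of htil, g, h0 at points of [0, τ)
  have hhtil_contAt : ∀ j, ∀ x, 0 ≤ x → x < τ → ContinuousAt (htil j) x := by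
    intro j x hx0 hxτ
    exact primitive_contAt hx0 hxτ (hfj_cont j) (hfj_meas j)
  have hg_contAt : ∀ x, 0 ≤ x → x < τ → ContinuousAt g x := by
    intro x hx0 hxτ
    rw [hg_def]
    exact tendsto_finset_sum _ fun j _ => tendsto_const_nhds.mul (hhtil_contAt j x hx0 hxτ)
  -- h0 facts
  have hf0_cont : ContinuousOn (fun u : ℝ => u / (1 - u / τ)) (Set.Iio τ) := by
    apply ContinuousOn.div
    · fun_prop
    · fun_prop
    · exact fun u hu => ne_of_gt (hden u hu)
  have hf0_meas : Measurable (fun u : ℝ => u / (1 - u / τ)) := by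
    apply Measurable.div <;> fun_prop
  have hh0_contAt : ∀ x, 0 ≤ x → x < τ → ContinuousAt h0 x := by
    intro x hx0 hxτ
    exact (primitive_contAt hx0 hxτ hf0_cont hf0_meas).const_mul (b / τ)
  have hh0_eq : ∀ v, 0 ≤ v → v < τ → h0 v = -(b*v) - b * τ * Real.log (1 - v/τ) := by
    intro v hv0 hvτ
    have key : (∫ u in (0:ℝ)..v, u / (1 - u / τ))
        = (-(τ*v) - τ^2 * Real.log (1 - v/τ)) - (-(τ*0) - τ^2 * Real.log (1 - 0/τ)) := by
      apply intervalIntegral.integral_eq_sub_of_hasDerivAt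
      · intro u hu
        rw [Set.uIcc_of_le hv0] at hu
        have huτ : u < τ := lt_of_le_of_lt hu.2 hvτ
        have hd : 0 < 1 - u / τ := hden u huτ
        have h1 : HasDerivAt (fun u : ℝ => 1 - u / τ) (-(1/τ)) u := by
          simpa using ((hasDerivAt_id u).div_const τ).const_sub 1
        have h2 : HasDerivAt (fun u : ℝ => Real.log (1 - u / τ)) ((-(1/τ)) / (1 - u/τ)) u :=
          HasDerivAt.log h1 (ne_of_gt hd)
        have h3 : HasDerivAt (fun u : ℝ => -(τ*u) - τ^2 * Real.log (1 - u/τ))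
            (-τ - τ^2 * ((-(1/τ)) / (1 - u/τ))) u := by
          have ha : HasDerivAt (fun u : ℝ => -(τ*u)) (-τ) u := by
            have := ((hasDerivAt_id' u).const_mul τ).neg
            simp only [mul_one] at this
            exact this
          exact ha.sub (h2.const_mul (τ^2))
        refine h3.congr_deriv ?_
        symm
        have h5 : -u + τ ≠ 0 := ne_of_gt (by linarith)
        field_simp [ne_of_gt hd, hτ.ne']
        linear_combination (-1) * mul_inv_cancel₀ h5
      · exact (hf0_cont.mono (hsubIcc 0 v hτ hvτ)).intervalIntegrable
    simp only [h0, key]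
    rw [zero_div, sub_zero, Real.log_one]
    field_simp
    ring
  -- w facts
  have hw0 : w 0 = 1 := by
    simp only [hw_def, h0]
    norm_num
  have hw_contAt : ContinuousAt w 0 := by
    rw [hw_def]
    apply ContinuousAt.mul
    · exact (Real.continuous_exp.continuousAt).comp (hh0_contAt 0 le_rfl hτ).neg
    · apply ContinuousAt.div
      · fun_prop
      · fun_prop
      · norm_num
  -- rewriting of φ in explicit form on (0, τ)
  have hφ_explicit : ∀ B : ℝ, ∀ v, 0 ≤ v → v < τ →
      φ B v = Real.exp (-(B * g v)) * (Real.exp ((b-r)*v) * (1 - v/τ) ^ (b*τ - 1)) := by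
    intro B v hv0 hvτ
    have hd : 0 < 1 - v / τ := hden v hvτ
    rw [hφ_def]
    simp only
    rw [hh0_eq v hv0 hvτ]
    rw [Real.rpow_def_of_pos hd]
    rw [div_eq_mul_inv (Real.exp (-r*v)), ← Real.exp_log (x := (1 - v/τ)⁻¹) (by positivity)]
    rw [Real.log_inv]
    rw [← Real.exp_add, ← Real.exp_add, ← Real.exp_add, ← Real.exp_add]
    congr 1
    ring
  -- nonnegativity of φ
  have hφ_nonneg : ∀ B : ℝ, ∀ v, v ≤ τ → 0 ≤ φ B v := by
    intro B v hv
    apply mul_nonneg (Real.exp_nonneg _)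
    apply div_nonneg (Real.exp_nonneg _)
    have : v / τ ≤ 1 := (div_le_one hτ).2 hv
    linarith
  have hφτ : ∀ B : ℝ, φ B τ = 0 := by
    intro B
    simp only [hφ_def]
    rw [div_self hτ.ne']
    norm_num
  -- continuity of φ B on (0, τ)
  have hφ_contOn : ∀ B : ℝ, ContinuousOn (φ B) (Set.Ioo 0 τ) := by
    intro B
    intro x hx
    apply ContinuousAt.continuousWithinAt
    have h1 : ContinuousAt (fun v => -(h0 v) - B * g v) x :=
      ((hh0_contAt x hx.1.le hx.2).neg).sub ((hg_contAt x hx.1.le hx.2).const_mul B)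
    have h2 : ContinuousAt (fun v => Real.exp (-r*v) / (1 - v/τ)) x := by
      apply ContinuousAt.div
      · fun_prop
      · fun_prop
      · exact ne_of_gt (hden x hx.2)
    exact ((Real.continuous_exp.continuousAt).comp h1).mul h2
  have hφ_aesm : ∀ B : ℝ, AEStronglyMeasurable (φ B) (volume.restrict (Set.uIoc 0 τ)) := by
    intro B
    rw [Set.uIoc_of_le hτ.le, ← MeasureTheory.Measure.restrict_congr_set Ioo_ae_eq_Ioc]
    exact (hφ_contOn B).aestronglyMeasurable measurableSet_Ioo
  -- the integrable majorant
  set p : ℝ := b * τ - 1 with hp_def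
  have hp : (-1 : ℝ) < p := by nlinarith
  set maj : ℝ → ℝ := fun v => Real.exp ((b-r)*τ) * ((τ - v) ^ p * (τ⁻¹) ^ p) with hmaj_def
  have hmaj_nonneg : ∀ v, v ≤ τ → 0 ≤ maj v := by
    intro v hv
    apply mul_nonneg (Real.exp_nonneg _)
    apply mul_nonneg (Real.rpow_nonneg (by linarith) _) (Real.rpow_nonneg (by positivity) _)
  have hmaj_int : IntervalIntegrable maj volume 0 τ := by
    have i1 : IntervalIntegrable (fun x : ℝ => x ^ p) volume τ 0 := intervalIntegrable_rpow' hp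
    have i2 := i1.comp_sub_left τ
    simp only [sub_self, sub_zero] at i2
    exact (i2.mul_const ((τ⁻¹) ^ p)).const_mul _
  -- the pointwise bound and integrability of φ B
  have hφint : ∀ B : ℝ, 0 ≤ B → IntervalIntegrable (φ B) volume 0 τ := by
    intro B hB
    apply hmaj_int.mono_fun (hφ_aesm B)
    rw [Filter.EventuallyLE, MeasureTheory.ae_restrict_iff' measurableSet_uIoc]
    apply Filter.Eventually.of_forall
    intro v hv
    rw [Set.uIoc_of_le hτ.le] at hv
    rcases eq_or_lt_of_le hv.2 with hveq | hvlt
    · rw [hveq, hφτ B]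
      simp only [norm_zero, Real.norm_eq_abs]  -- ‖0‖ ≤ ‖maj τ‖
      positivity
    · have hv0 : (0:ℝ) ≤ v := hv.1.le
      have e1 : (1 - v/τ) = (τ - v) * τ⁻¹ := by field_simp
      have e2 : φ B v = Real.exp (-(B * g v)) * (Real.exp ((b-r)*v) * ((τ - v) ^ p * (τ⁻¹) ^ p)) := by
        rw [hφ_explicit B v hv0 hvlt, e1, Real.mul_rpow (by linarith) (by positivity)]
      have hle : φ B v ≤ maj v := by
        rw [e2, hmaj_def]
        have b1 : Real.exp (-(B * g v)) ≤ 1 := by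
          rw [Real.exp_le_one_iff]
          simp only [neg_nonpos]
          exact mul_nonneg hB (hg_nonneg v hv0 hvlt)
        have b2 : Real.exp ((b-r)*v) ≤ Real.exp ((b-r)*τ) := by
          apply Real.exp_le_exp.2
          apply mul_le_mul_of_nonneg_left hvlt.le (by linarith)
        have b3 : 0 ≤ (τ - v) ^ p * (τ⁻¹) ^ p :=
          mul_nonneg (Real.rpow_nonneg (by linarith) _) (Real.rpow_nonneg (by positivity) _)
        calc Real.exp (-(B * g v)) * (Real.exp ((b-r)*v) * ((τ - v) ^ p * (τ⁻¹) ^ p))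
            ≤ 1 * (Real.exp ((b-r)*v) * ((τ - v) ^ p * (τ⁻¹) ^ p)) := by
              apply mul_le_mul_of_nonneg_right b1 (mul_nonneg (Real.exp_nonneg _) b3)
          _ = Real.exp ((b-r)*v) * ((τ - v) ^ p * (τ⁻¹) ^ p) := one_mul _
          _ ≤ Real.exp ((b-r)*τ) * ((τ - v) ^ p * (τ⁻¹) ^ p) :=
              mul_le_mul_of_nonneg_right b2 b3
      rw [Real.norm_eq_abs, Real.norm_eq_abs, abs_of_nonneg (hφ_nonneg B v hv.2),
        abs_of_nonneg (hmaj_nonneg v hv.2)]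
      exact hle
  -- slope limit : fg u / u → c as u → 0⁺
  have hslope : Tendsto (fun u => fg u / u) (nhdsWithin 0 (Set.Ioi 0)) (nhds c) := by
    have hj : ∀ j : Fin (K-1), Tendsto (fun u => fj j u / u) (nhdsWithin 0 (Set.Ioi 0)) (nhds (μ j)) := by
      intro j
      set N : ℝ → ℝ := fun u => 1 - Real.exp (-(μ j) * u) with hN_def
      have d1 : HasDerivAt (fun u : ℝ => -(μ j) * u) (-(μ j)) 0 := by
        simpa using (hasDerivAt_id (0:ℝ)).const_mul (-(μ j))
      have d2 := d1.exp
      have d3 := d2.const_sub 1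
      have hN : HasDerivAt N (μ j) 0 := by
        rw [hN_def]; refine d3.congr_deriv ?_; simp
      have hs := hasDerivAt_iff_tendsto_slope.mp hN
      have hs' : Tendsto (slope N 0) (nhdsWithin 0 (Set.Ioi 0)) (nhds (μ j)) :=
        hs.mono_left (nhdsWithin_mono 0 (fun x hx => by simpa using (ne_of_gt hx)))
      have hsl : ∀ u : ℝ, slope N 0 u = N u / u := by
        intro u
        rw [slope_def_field]
        simp [hN_def]
      have hq : Tendsto (fun u : ℝ => 1 / (1 - u/τ)) (nhdsWithin 0 (Set.Ioi 0)) (nhds 1) := by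
        have hca : ContinuousAt (fun u : ℝ => 1 / (1 - u/τ)) 0 := by
          apply ContinuousAt.div
          · fun_prop
          · fun_prop
          · norm_num
        have h5 : Tendsto (fun u : ℝ => 1 / (1 - u/τ)) (nhdsWithin 0 (Set.Ioi 0)) (nhds (1 / (1 - 0/τ))) :=
          hca.tendsto.mono_left nhdsWithin_le_nhds
        simpa using h5
      have hmul := (hs'.mul hq)
      rw [mul_one] at hmul
      apply hmul.congr
      intro u
      rw [hsl u]
      rw [div_mul_div_comm, mul_one, mul_comm u (1 - u/τ), ← div_div]
    have hsum := tendsto_finset_sum (Finset.univ : Finset (Fin (K-1)))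
      (fun j _ => (hj j).const_mul (t j))
    have hval : c = ∑ j, t j * μ j := by
      rw [hc_def]; exact Finset.sum_congr rfl fun j _ => mul_comm _ _
    rw [hval]
    apply hsum.congr
    intro u
    rw [hfg_def]
    simp only
    rw [Finset.sum_div]
    exact Finset.sum_congr rfl fun j _ => (mul_div_assoc _ _ _).symm
  -- choice of δ for given ε
  have hsandwich : ∀ ε : ℝ, 0 < ε → ε < 1 → ∃ δ, 0 < δ ∧ δ < τ ∧
      (∀ v ∈ Set.Icc 0 δ, ((1-ε)*c*(v^2/2) ≤ g v ∧ g v ≤ (1+ε)*c*(v^2/2)) ∧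
        (1-ε ≤ w v ∧ w v ≤ 1+ε)) := by
    intro ε hε hε1
    -- δ₁ for fg
    have hev : ∀ᶠ u in nhdsWithin 0 (Set.Ioi 0), fg u / u ∈ Set.Icc ((1-ε)*c) ((1+ε)*c) :=
      hslope (Icc_mem_nhds (by nlinarith) (by nlinarith))
    rw [Filter.eventually_iff, mem_nhdsGT_iff_exists_Ioc_subset] at hev
    obtain ⟨δ₁, hδ₁pos, hδ₁sub⟩ := hev
    -- δ₂ for w
    have hwev : w ⁻¹' Set.Icc (1-ε) (1+ε) ∈ nhds (0:ℝ) := by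
      have := hw_contAt.tendsto
      rw [hw0] at this
      exact this (Icc_mem_nhds (by linarith) (by linarith))
    rw [Metric.mem_nhds_iff] at hwev
    obtain ⟨η, hηpos, hηsub⟩ := hwev
    have hδ₁pos' : 0 < δ₁ := hδ₁pos
    refine ⟨min (min δ₁ (η/2)) (τ/2), by positivity, ?_, ?_⟩
    · calc min (min δ₁ (η/2)) (τ/2) ≤ τ/2 := min_le_right _ _
        _ < τ := by linarith
    intro v hv
    have hvτ : v < τ := by
      have := hv.2
      have h2 : min (min δ₁ (η/2)) (τ/2) ≤ τ/2 := min_le_right _ _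
      linarith
    constructor
    · -- g bounds via integral comparison
      have hfgb : ∀ u ∈ Set.Icc 0 v, (1-ε)*c*u ≤ fg u ∧ fg u ≤ (1+ε)*c*u := by
        intro u hu
        rcases eq_or_lt_of_le hu.1 with h0u | h0u
        · have : fg u = 0 := by
            rw [← h0u, hfg_def]
            simp [hfj_def]
          rw [this, ← h0u]
          norm_num
        · have huδ₁ : u ∈ Set.Ioc 0 δ₁ := by
            constructor
            · exact h0u
            · have h3 : v ≤ min (min δ₁ (η/2)) (τ/2) := hv.2
              have h4 : min (min δ₁ (η/2)) (τ/2) ≤ δ₁ :=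
                le_trans (min_le_left _ _) (min_le_left _ _)
              linarith [hu.2]
          have := hδ₁sub huδ₁
          simp only [Set.mem_setOf_eq, Set.mem_Icc] at this
          constructor
          · exact (le_div_iff₀ h0u).1 this.1
          · exact (div_le_iff₀ h0u).1 this.2
        
      have hgv : g v = ∫ u in (0:ℝ)..v, fg u := hg_eq v hvτ
      have hlow : (1-ε)*c*(v^2/2) ≤ g v := by
        rw [hgv]
        have : ∫ u in (0:ℝ)..v, (1-ε)*c*u = (1-ε)*c*(v^2/2) := by
          rw [show (fun u : ℝ => (1-ε)*c*u) = fun u : ℝ => ((1-ε)*c) * u from rfl]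
          rw [intervalIntegral.integral_const_mul, integral_id]
          ring
        rw [← this]
        apply intervalIntegral.integral_mono_on hv.1
        · exact (intervalIntegral.intervalIntegrable_id).const_mul _
        · exact hfg_int v hvτ
        · exact fun u hu => (hfgb u hu).1
      have hhigh : g v ≤ (1+ε)*c*(v^2/2) := by
        rw [hgv]
        have : ∫ u in (0:ℝ)..v, (1+ε)*c*u = (1+ε)*c*(v^2/2) := by
          rw [show (fun u : ℝ => (1+ε)*c*u) = fun u : ℝ => ((1+ε)*c) * u from rfl]
          rw [intervalIntegral.integral_const_mul, integral_id]
          ring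
        rw [← this]
        apply intervalIntegral.integral_mono_on hv.1
        · exact hfg_int v hvτ
        · exact (intervalIntegral.intervalIntegrable_id).const_mul _
        · exact fun u hu => (hfgb u hu).2
      exact ⟨hlow, hhigh⟩
    · -- w bounds
      have hvball : v ∈ Metric.ball (0:ℝ) η := by
        rw [Metric.mem_ball, Real.dist_eq, sub_zero, abs_of_nonneg hv.1]
        have h3 : v ≤ min (min δ₁ (η/2)) (τ/2) := hv.2
        have h4 : min (min δ₁ (η/2)) (τ/2) ≤ η/2 :=
          le_trans (min_le_left _ _) (min_le_right _ _)
        linarith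
      have := hηsub hvball
      exact ⟨this.1, this.2⟩
  -- the split of φ into gaussian-type factor and weight
  have hφ_split : ∀ B v : ℝ, φ B v = Real.exp (-(B * g v)) * w v := by
    intro B v
    rw [hφ_def, hw_def]
    simp only
    rw [← mul_assoc, ← Real.exp_add]
    congr 2
    ring
  -- uIcc inclusions
  have hsub1 : ∀ x y : ℝ, 0 ≤ x → x ≤ τ → 0 ≤ y → y ≤ τ → Set.uIcc x y ⊆ Set.uIcc 0 τ := by
    intro x y hx hxτ hy hyτ
    rw [Set.uIcc_of_le hτ.le]
    exact Set.uIcc_subset_Icc ⟨hx, hxτ⟩ ⟨hy, hyτ⟩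
  -- the key limit J → L
  set J : ℝ → ℝ := fun B => Real.sqrt B * ∫ v in (0:ℝ)..τ, φ B v with hJ_def
  set L : ℝ := Real.sqrt (π / (c/2)) / 2 with hL_def
  have hJlim : Tendsto J atTop (nhds L) := by
    rw [Metric.tendsto_nhds]
    intro ε' hε'
    -- choose ε
    have htU : Tendsto (fun ε : ℝ => (1+ε) * (Real.sqrt (π / ((1-ε)*c/2)) / 2))
        (nhdsWithin 0 (Set.Ioi 0)) (nhds L) := by
      have h1 : Tendsto (fun ε : ℝ => (1-ε)*c/2) (nhds 0) (nhds (c/2)) := by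
        have : ContinuousAt (fun ε : ℝ => (1-ε)*c/2) 0 := by fun_prop
        simpa using this.tendsto
      have h2 : Tendsto (fun ε : ℝ => Real.sqrt (π / ((1-ε)*c/2)) / 2) (nhds 0)
          (nhds (Real.sqrt (π / (c/2)) / 2)) := by
        apply Tendsto.div_const
        apply Real.continuous_sqrt.continuousAt.tendsto.comp
        exact tendsto_const_nhds.div h1 (by positivity)
      have h3 : Tendsto (fun ε : ℝ => (1+ε)) (nhds (0:ℝ)) (nhds 1) := by
        have : ContinuousAt (fun ε : ℝ => 1+ε) 0 := by fun_prop
        simpa using this.tendsto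
      have h4 : Tendsto (fun ε : ℝ => (1+ε) * (Real.sqrt (π / ((1-ε)*c/2)) / 2))
          (nhdsWithin 0 (Set.Ioi 0)) (nhds (1 * (Real.sqrt (π / (c/2)) / 2))) :=
        (h3.mul h2).mono_left nhdsWithin_le_nhds
      simpa [hL_def] using h4
    have htL : Tendsto (fun ε : ℝ => (1-ε) * (Real.sqrt (π / ((1+ε)*c/2)) / 2))
        (nhdsWithin 0 (Set.Ioi 0)) (nhds L) := by
      have h1 : Tendsto (fun ε : ℝ => (1+ε)*c/2) (nhds 0) (nhds (c/2)) := by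
        have : ContinuousAt (fun ε : ℝ => (1+ε)*c/2) 0 := by fun_prop
        simpa using this.tendsto
      have h2 : Tendsto (fun ε : ℝ => Real.sqrt (π / ((1+ε)*c/2)) / 2) (nhds 0)
          (nhds (Real.sqrt (π / (c/2)) / 2)) := by
        apply Tendsto.div_const
        apply Real.continuous_sqrt.continuousAt.tendsto.comp
        exact tendsto_const_nhds.div h1 (by positivity)
      have h3 : Tendsto (fun ε : ℝ => (1-ε)) (nhds (0:ℝ)) (nhds 1) := by
        have : ContinuousAt (fun ε : ℝ => 1-ε) 0 := by fun_prop
        simpa using this.tendsto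
      have h4 : Tendsto (fun ε : ℝ => (1-ε) * (Real.sqrt (π / ((1+ε)*c/2)) / 2))
          (nhdsWithin 0 (Set.Ioi 0)) (nhds (1 * (Real.sqrt (π / (c/2)) / 2))) :=
        (h3.mul h2).mono_left nhdsWithin_le_nhds
      simpa [hL_def] using h4
    have hεex : ∃ ε : ℝ, (0 < ε ∧ ε < 1) ∧
        (1+ε) * (Real.sqrt (π / ((1-ε)*c/2)) / 2) < L + ε'/2 ∧
        L - ε'/2 < (1-ε) * (Real.sqrt (π / ((1+ε)*c/2)) / 2) := by
      have e1 : ∀ᶠ ε : ℝ in nhdsWithin 0 (Set.Ioi 0),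
          (1+ε) * (Real.sqrt (π / ((1-ε)*c/2)) / 2) < L + ε'/2 :=
        htU (Iio_mem_nhds (by linarith))
      have e2 : ∀ᶠ ε : ℝ in nhdsWithin 0 (Set.Ioi 0),
          L - ε'/2 < (1-ε) * (Real.sqrt (π / ((1+ε)*c/2)) / 2) :=
        htL (Ioi_mem_nhds (by linarith))
      have e3 : ∀ᶠ ε : ℝ in nhdsWithin 0 (Set.Ioi 0), 0 < ε :=
        eventually_mem_nhdsWithin
      have e4 : ∀ᶠ ε : ℝ in nhdsWithin 0 (Set.Ioi 0), ε < 1 :=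
        Filter.eventually_iff_exists_mem.2 ⟨Set.Ioi 0 ∩ Set.Iio 1,
          inter_mem_nhdsWithin _ (Iio_mem_nhds one_pos), fun y hy => hy.2⟩
      obtain ⟨ε, hε⟩ := (((e1.and e2).and e3).and e4).exists
      exact ⟨ε, ⟨hε.1.2, hε.2⟩, hε.1.1.1, hε.1.1.2⟩
    obtain ⟨ε, ⟨hε0, hε1⟩, hεU, hεL⟩ := hεex
    obtain ⟨δ, hδ0, hδτ, hδprop⟩ := hsandwich ε hε0 hε1
    set aP : ℝ := (1+ε)*c/2 with haP_def
    set aM : ℝ := (1-ε)*c/2 with haM_def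
    have haP : 0 < aP := by rw [haP_def]; positivity
    have haM : 0 < aM := by rw [haM_def]; nlinarith
    have hgδ : 0 < g δ := by
      rw [hg_eq δ hδτ]
      apply intervalIntegral.intervalIntegral_pos_of_pos_on (hfg_int δ hδτ)
        (fun x hx => hfg_pos x hx.1 (lt_trans hx.2 hδτ)) hδ0
    set M : ℝ := ∫ v in δ..τ, φ 1 v with hM_def
    -- low/up functions
    have hLow : Tendsto (fun B : ℝ => (1-ε) * (Real.sqrt B * ∫ v in (0:ℝ)..δ, Real.exp (-(B*aP) * v^2)))
        atTop (nhds ((1-ε) * (Real.sqrt (π/aP) / 2))) := (gauss_lim haP hδ0).const_mul _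
    have hUp : Tendsto (fun B : ℝ => (1+ε) * (Real.sqrt B * ∫ v in (0:ℝ)..δ, Real.exp (-(B*aM) * v^2))
          + Real.sqrt B * (Real.exp (-(B-1)*(g δ)) * M))
        atTop (nhds ((1+ε) * (Real.sqrt (π/aM) / 2) + 0)) :=
      ((gauss_lim haM hδ0).const_mul _).add (sqrt_exp_decay hgδ M)
    have evLow : ∀ᶠ B : ℝ in atTop,
        L - ε' < (1-ε) * (Real.sqrt B * ∫ v in (0:ℝ)..δ, Real.exp (-(B*aP) * v^2)) := by
      apply hLow.eventually (Ioi_mem_nhds ?_)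
      calc L - ε' < L - ε'/2 := by linarith
        _ < (1-ε) * (Real.sqrt (π / ((1+ε)*c/2)) / 2) := hεL
        _ = (1-ε) * (Real.sqrt (π/aP) / 2) := by rw [haP_def]
    have evUp : ∀ᶠ B : ℝ in atTop,
        (1+ε) * (Real.sqrt B * ∫ v in (0:ℝ)..δ, Real.exp (-(B*aM) * v^2))
          + Real.sqrt B * (Real.exp (-(B-1)*(g δ)) * M) < L + ε' := by
      apply hUp.eventually (Iio_mem_nhds ?_)
      rw [add_zero]
      calc (1+ε) * (Real.sqrt (π/aM) / 2) = (1+ε) * (Real.sqrt (π / ((1-ε)*c/2)) / 2) := by rw [haM_def]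
        _ < L + ε'/2 := hεU
        _ < L + ε' := by linarith
    filter_upwards [evLow, evUp, eventually_ge_atTop (1:ℝ)] with B hB1 hB2 hBge
    have hB0 : (0:ℝ) ≤ B := by linarith
    have hsqrt0 : (0:ℝ) ≤ Real.sqrt B := Real.sqrt_nonneg _
    -- integrability pieces
    have hi1 : IntervalIntegrable (φ B) volume 0 δ :=
      (hφint B hB0).mono_set (hsub1 0 δ le_rfl hτ.le hδ0.le hδτ.le)
    have hi2 : IntervalIntegrable (φ B) volume δ τ :=
      (hφint B hB0).mono_set (hsub1 δ τ hδ0.le hδτ.le hτ.le le_rfl)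
    have hi1' : IntervalIntegrable (φ 1) volume δ τ :=
      (hφint 1 zero_le_one).mono_set (hsub1 δ τ hδ0.le hδτ.le hτ.le le_rfl)
    -- splitting
    have hIsplit : (∫ v in (0:ℝ)..τ, φ B v) = (∫ v in (0:ℝ)..δ, φ B v) + ∫ v in δ..τ, φ B v :=
      (intervalIntegral.integral_add_adjacent_intervals hi1 hi2).symm
    -- lower bound for the main part
    have hmainLow : (1-ε) * ∫ v in (0:ℝ)..δ, Real.exp (-(B*aP) * v^2) ≤ ∫ v in (0:ℝ)..δ, φ B v := by
      rw [← intervalIntegral.integral_const_mul]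
      apply intervalIntegral.integral_mono_on hδ0.le
      · exact (Continuous.intervalIntegrable (by fun_prop) _ _)
      · exact hi1
      · intro v hv
        obtain ⟨⟨hg1, hg2⟩, ⟨hw1, hw2⟩⟩ := hδprop v hv
        rw [hφ_split]
        have e1 : Real.exp (-(B*aP) * v^2) ≤ Real.exp (-(B * g v)) := by
          apply Real.exp_le_exp.2
          have : g v ≤ aP * v^2 := by rw [haP_def]; nlinarith
          nlinarith
        calc (1-ε) * Real.exp (-(B*aP) * v^2) = Real.exp (-(B*aP) * v^2) * (1-ε) := mul_comm _ _
          _ ≤ Real.exp (-(B * g v)) * w v :=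
            mul_le_mul e1 hw1 (by linarith) (Real.exp_nonneg _)
    -- upper bound for the main part
    have hmainUp : (∫ v in (0:ℝ)..δ, φ B v) ≤ (1+ε) * ∫ v in (0:ℝ)..δ, Real.exp (-(B*aM) * v^2) := by
      rw [← intervalIntegral.integral_const_mul]
      apply intervalIntegral.integral_mono_on hδ0.le hi1
      · exact (Continuous.intervalIntegrable (by fun_prop) _ _)
      · intro v hv
        obtain ⟨⟨hg1, hg2⟩, ⟨hw1, hw2⟩⟩ := hδprop v hv
        rw [hφ_split]
        have e1 : Real.exp (-(B * g v)) ≤ Real.exp (-(B*aM) * v^2) := by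
          apply Real.exp_le_exp.2
          have : aM * v^2 ≤ g v := by rw [haM_def]; nlinarith
          nlinarith
        calc Real.exp (-(B * g v)) * w v ≤ Real.exp (-(B*aM) * v^2) * (1+ε) :=
            mul_le_mul e1 hw2 (by nlinarith [Real.exp_pos (-(h0 v)), hφ_split 0 v]) (Real.exp_nonneg _)
          _ = (1+ε) * Real.exp (-(B*aM) * v^2) := mul_comm _ _
    -- tail bounds
    have htail0 : 0 ≤ ∫ v in δ..τ, φ B v :=
      intervalIntegral.integral_nonneg hδτ.le (fun v hv => hφ_nonneg B v hv.2)
    have htailUp : (∫ v in δ..τ, φ B v) ≤ Real.exp (-(B-1)*(g δ)) * M := by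
      rw [hM_def, ← intervalIntegral.integral_const_mul]
      apply intervalIntegral.integral_mono_on hδτ.le hi2 (hi1'.const_mul _)
      intro v hv
      rcases eq_or_lt_of_le hv.2 with hveq | hvlt
      · rw [hveq, hφτ B, hφτ 1, mul_zero]
      · have e0 : φ B v = Real.exp (-(B-1) * g v) * φ 1 v := by
          have hx : Real.exp (-(B * g v)) = Real.exp (-(B-1) * g v) * Real.exp (-(1 * g v)) := by
            rw [← Real.exp_add]
            congr 1
            ring
          rw [hφ_split B v, hφ_split 1 v, hx, mul_assoc]
        rw [e0]
        apply mul_le_mul_of_nonneg_right _ ?_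
        · apply Real.exp_le_exp.2
          have hgv : g δ ≤ g v := hg_mono δ v hδ0.le hv.1 hvlt
          nlinarith
        · rw [hφ_split]
          apply mul_nonneg (Real.exp_nonneg _)
          rw [hw_def]
          apply mul_nonneg (Real.exp_nonneg _)
          apply div_nonneg (Real.exp_nonneg _)
          have : v / τ < 1 := (div_lt_one hτ).2 hvlt
          linarith
    -- combine
    have hJlow : L - ε' < J B := by
      calc L - ε' < (1-ε) * (Real.sqrt B * ∫ v in (0:ℝ)..δ, Real.exp (-(B*aP) * v^2)) := hB1
        _ = Real.sqrt B * ((1-ε) * ∫ v in (0:ℝ)..δ, Real.exp (-(B*aP) * v^2)) := by ring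
        _ ≤ Real.sqrt B * ∫ v in (0:ℝ)..δ, φ B v := by
            apply mul_le_mul_of_nonneg_left hmainLow hsqrt0
        _ ≤ Real.sqrt B * ((∫ v in (0:ℝ)..δ, φ B v) + ∫ v in δ..τ, φ B v) := by
            apply mul_le_mul_of_nonneg_left _ hsqrt0
            linarith
        _ = J B := by rw [hJ_def]; simp only; rw [hIsplit]
    have hJup : J B < L + ε' := by
      calc J B = Real.sqrt B * ((∫ v in (0:ℝ)..δ, φ B v) + ∫ v in δ..τ, φ B v) := by
            rw [hJ_def]; simp only; rw [hIsplit]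
        _ ≤ Real.sqrt B * ((1+ε) * (∫ v in (0:ℝ)..δ, Real.exp (-(B*aM) * v^2))
              + Real.exp (-(B-1)*(g δ)) * M) := by
            apply mul_le_mul_of_nonneg_left _ hsqrt0
            linarith
        _ = (1+ε) * (Real.sqrt B * ∫ v in (0:ℝ)..δ, Real.exp (-(B*aM) * v^2))
              + Real.sqrt B * (Real.exp (-(B-1)*(g δ)) * M) := by ring
        _ < L + ε' := hB2
    rw [Real.dist_eq, abs_sub_lt_iff]
    constructor <;> linarith
  -- conclusion
  have hLs : L * Real.sqrt (2*c/π) = 1 := by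
    rw [hL_def, div_mul_eq_mul_div, ← Real.sqrt_mul (by positivity : (0:ℝ) ≤ π/(c/2))]
    have h4 : (π/(c/2)) * (2*c/π) = 4 := by
      field_simp
      ring
    rw [h4, show (4:ℝ) = 2^2 by norm_num, Real.sqrt_sq (by norm_num : (0:ℝ) ≤ 2)]
    norm_num
  have hmul : Tendsto (fun B => J B * Real.sqrt (2*c/π)) atTop (nhds 1) := by
    have h5 := hJlim.mul_const (Real.sqrt (2*c/π))
    rwa [hLs] at h5
  have hinv : Tendsto (fun B => (J B * Real.sqrt (2*c/π))⁻¹) atTop (nhds 1) := by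
    have h6 := hmul.inv₀ one_ne_zero
    simpa using h6
  apply hinv.congr'
  have hsum : ∀ B : ℝ, ∀ v : ℝ, ∑ j, (B * t j) * htil j v = B * g v := by
    intro B v
    rw [hg_def]
    simp only
    rw [Finset.mul_sum]
    exact Finset.sum_congr rfl fun j _ => by ring
  filter_upwards [eventually_ge_atTop (0:ℝ)] with B hB0
  have hFeq : F (fun j => B * t j) = (∫ v in (0:ℝ)..τ, φ B v)⁻¹ := by
    simp only [F]
    congr 1
    apply intervalIntegral.integral_congr
    intro v _
    simp only [hφ_def]
    rw [hsum B v]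
  have hdeneq : Real.sqrt ((2/π) * ∑ j, μ j * (B * t j))
      = Real.sqrt B * Real.sqrt (2*c/π) := by
    have h1 : ∑ j, μ j * (B * t j) = B * c := by
      rw [hc_def, Finset.mul_sum]
      exact Finset.sum_congr rfl fun j _ => by ring
    rw [h1, show (2/π) * (B*c) = B * (2*c/π) from by ring, Real.sqrt_mul hB0]
  rw [hFeq, hdeneq, hJ_def]
  simp only
  simp only [div_eq_mul_inv, mul_inv]
  ring
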